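/- Let 1 < β_0 < β_1 be such that the β_0-expansion of 1 and the β_1-expansion of 1 each have infinitely many nonzero digits, let M = min{n ≥ 1 : ε_n(1,β_0) ≠ ε_n(1,β_1)}, and let β_2 = sup I_M^P(ε_1(1,β_0),…,ε_M(1,β_0)) be the right endpoint of the parameter cylinder of (ε_1(1,β_0),…,ε_M(1,β_0)). Then for every infinite sequence w ∈ S_{β_2}, the infinite sequence ε = (ε_1(1,β_1),…,ε_M(1,β_1), 0^M, w) (the first M digits of the β_1-expansion of 1, followed by M zeros, followed by w) is self-admissible, i.e. σ^i ε ≺ ε for all i ≥ 1. -/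

import Mathlib

open Filter MeasureTheory Set
open scoped ENNReal

/-- The β-transformation `T_β x = βx - ⌊βx⌋`. -/
noncomputable def betaT (β : ℝ) : ℝ → ℝ := fun x => β * x - (⌊β * x⌋ : ℝ)

/-- The digits of the β-expansion of 1: `epsDig β i = ε_{i+1}(1,β) = ⌊β · T_β^i 1⌋`. -/
noncomputable def epsDig (β : ℝ) (i : ℕ) : ℕ := (⌊β * (betaT β)^[i] 1⌋).toNat

/-- Strict lexicographic order on words of length `m` (identified with their
extensions by zeros). -/
def wordLexLt (m : ℕ) (a b : ℕ → ℕ) : Prop :=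
  ∃ k < m, (∀ j < k, a j = b j) ∧ a k < b k

/-- Non-strict lexicographic order on words of length `m`. -/
def wordLexLe (m : ℕ) (a b : ℕ → ℕ) : Prop :=
  wordLexLt m a b ∨ ∀ j < m, a j = b j

/-- A word `w = (w 0, …, w (n-1))` is self-admissible if `σ^i w ⪯ (w 0, …, w (n-1-i))`
for all `0 ≤ i < n`. -/
def SelfAdmissible (n : ℕ) (w : ℕ → ℕ) : Prop :=
  ∀ i < n, wordLexLe (n - i) (fun j => w (i + j)) w

/-- The recurrence time `τ(w)` of a word of length `n`: the least `1 ≤ k < n` with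
`σ^k w = (w 0, …, w (n-1-k))`, and `n` if no such `k` exists. -/
noncomputable def recTime (n : ℕ) (w : ℕ → ℕ) : ℕ :=
  sInf ({k | 1 ≤ k ∧ k < n ∧ ∀ j < n - k, w (k + j) = w j} ∪ {n})

/-- The cylinder of order `n` in the parameter space: the set of `β > 1` whose
β-expansion of 1 starts with the word `w`. -/
def cylP (n : ℕ) (w : ℕ → ℕ) : Set ℝ := {β | 1 < β ∧ ∀ i < n, epsDig β i = w i}

open Classical in
/-- The infinite β-expansion of 1: if the expansion of 1 is finite with last
nonzero digit at (0-indexed) position `m`, it is `(ε_1, …, ε_m, ε_{m+1} - 1)^∞`;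
otherwise it is the expansion of 1 itself. -/
noncomputable def epsStar (β : ℝ) : ℕ → ℕ :=
  if h : ∃ m, epsDig β m ≠ 0 ∧ ∀ i, m < i → epsDig β i = 0 then
    fun i => if i % (h.choose + 1) = h.choose then epsDig β h.choose - 1
             else epsDig β (i % (h.choose + 1))
  else epsDig β

/-- `runLenStar β n` is the number of consecutive zeros in `ε*(1,β)` just after
(1-indexed) index `n`, i.e. the largest `k` with `ε*_{n+1} = … = ε*_{n+k} = 0`. -/
noncomputable def runLenStar (β : ℝ) (n : ℕ) : ℕ :=
  sSup {k | ∀ j < k, epsStar β (n + j) = 0}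

/-- `runLen β n` is the number of consecutive zeros in `ε(1,β)` just after
(1-indexed) index `n`. -/
noncomputable def runLen (β : ℝ) (n : ℕ) : ℕ :=
  sSup {k | ∀ j < k, epsDig β (n + j) = 0}

/-- Strict lexicographic order on infinite sequences. -/
def seqLexLt (a b : ℕ → ℕ) : Prop := ∃ k, (∀ j < k, a j = b j) ∧ a k < b k

/-- Non-strict lexicographic order on infinite sequences. -/
def seqLexLe (a b : ℕ → ℕ) : Prop := seqLexLt a b ∨ a = b

/-- The β-shift `S_β` (via Parry's criterion): all sequences whose every shift is
lexicographically at most `ε*(1,β)`. -/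
def Sbeta (β : ℝ) : Set (ℕ → ℕ) := {w | ∀ i, seqLexLe (fun j => w (i + j)) (epsStar β)}

lemma orbit_nonneg (β : ℝ) (n : ℕ) : 0 ≤ (betaT β)^[n] 1 := by
  cases n with
  | zero => norm_num
  | succ n =>
    rw [Function.iterate_succ_apply']
    have : betaT β ((betaT β)^[n] 1) = Int.fract (β * (betaT β)^[n] 1) := rfl
    rw [this]; exact Int.fract_nonneg _

lemma orbit_lt_one (β : ℝ) {n : ℕ} (hn : 0 < n) : (betaT β)^[n] 1 < 1 := by
  obtain ⟨k, rfl⟩ : ∃ k, n = k + 1 := ⟨n - 1, by omega⟩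
  rw [Function.iterate_succ_apply']
  have : betaT β ((betaT β)^[k] 1) = Int.fract (β * (betaT β)^[k] 1) := rfl
  rw [this]; exact Int.fract_lt_one _

lemma orbit_le_one (β : ℝ) (n : ℕ) : (betaT β)^[n] 1 ≤ 1 := by
  cases n with
  | zero => norm_num
  | succ n => exact (orbit_lt_one β (Nat.succ_pos n)).le

lemma epsDig_int (β : ℝ) (hβ : 0 < β) (n : ℕ) :
    (epsDig β n : ℤ) = ⌊β * (betaT β)^[n] 1⌋ := by
  have h : (0:ℤ) ≤ ⌊β * (betaT β)^[n] 1⌋ :=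
    Int.floor_nonneg.2 (mul_nonneg hβ.le (orbit_nonneg β n))
  simp only [epsDig, Int.toNat_of_nonneg h]

lemma epsDig_le (β : ℝ) (hβ : 0 < β) (n : ℕ) :
    (epsDig β n : ℝ) ≤ β * (betaT β)^[n] 1 := by
  have := Int.floor_le (β * (betaT β)^[n] 1)
  have h2 : ((epsDig β n : ℤ) : ℝ) = ((⌊β * (betaT β)^[n] 1⌋ : ℤ) : ℝ) := by
    rw [epsDig_int β hβ n]
  push_cast at h2 ⊢; linarith
lemma lt_epsDig_add_one (β : ℝ) (hβ : 0 < β) (n : ℕ) :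
    β * (betaT β)^[n] 1 < (epsDig β n : ℝ) + 1 := by
  have := Int.lt_floor_add_one (β * (betaT β)^[n] 1)
  have h2 : ((epsDig β n : ℤ) : ℝ) = ((⌊β * (betaT β)^[n] 1⌋ : ℤ) : ℝ) := by
    rw [epsDig_int β hβ n]
  push_cast at h2 ⊢; linarith

lemma orbit_succ (β : ℝ) (hβ : 0 < β) (n : ℕ) :
    (betaT β)^[n+1] 1 = β * (betaT β)^[n] 1 - (epsDig β n : ℝ) := by
  rw [Function.iterate_succ_apply']
  show β * _ - _ = _
  have h2 : ((epsDig β n : ℤ) : ℝ) = ((⌊β * (betaT β)^[n] 1⌋ : ℤ) : ℝ) := by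
    rw [epsDig_int β hβ n]
  push_cast at h2; rw [← h2]

lemma betaChain (β γ : ℝ) (hβ : 0 < β) (hβγ : β ≤ γ) (i₀ j₀ : ℕ)
    (hbase : β * (betaT β)^[i₀] 1 < γ * (betaT γ)^[j₀] 1) :
    ∀ k, (∀ j, j < k → epsDig β (i₀ + j) = epsDig γ (j₀ + j)) →
      β * (betaT β)^[i₀ + k] 1 < γ * (betaT γ)^[j₀ + k] 1 := by
  have hγ : 0 < γ := lt_of_lt_of_le hβ hβγ
  intro k
  induction k with
  | zero => intro _; simpa using hbase
  | succ k ih =>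
    intro hdig
    have h1 := ih (fun j hj => hdig j (hj.trans (Nat.lt_succ_self k)))
    have hd := hdig k (Nat.lt_succ_self k)
    have e1 : (betaT β)^[i₀+(k+1)] 1 = β * (betaT β)^[i₀+k] 1 - (epsDig β (i₀+k) : ℝ) := by
      rw [show i₀+(k+1) = (i₀+k)+1 by ring]; exact orbit_succ β hβ _
    have e2 : (betaT γ)^[j₀+(k+1)] 1 = γ * (betaT γ)^[j₀+k] 1 - (epsDig γ (j₀+k) : ℝ) := by
      rw [show j₀+(k+1) = (j₀+k)+1 by ring]; exact orbit_succ γ hγ _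
    have hu : (0:ℝ) ≤ (betaT β)^[i₀+(k+1)] 1 := orbit_nonneg β _
    have huv : (betaT β)^[i₀+(k+1)] 1 < (betaT γ)^[j₀+(k+1)] 1 := by
      rw [e1, e2, hd]; linarith
    calc β * (betaT β)^[i₀+(k+1)] 1 < β * (betaT γ)^[j₀+(k+1)] 1 :=
          (mul_lt_mul_iff_right₀ hβ).2 huv
      _ ≤ γ * (betaT γ)^[j₀+(k+1)] 1 := by
          apply mul_le_mul_of_nonneg_right hβγ; linarith

lemma digit_le_of_chain (β γ : ℝ) (hβ : 0 < β) (hβγ : β ≤ γ) (i₀ j₀ : ℕ)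
    (hbase : β * (betaT β)^[i₀] 1 < γ * (betaT γ)^[j₀] 1)
    (k : ℕ) (hdig : ∀ j, j < k → epsDig β (i₀ + j) = epsDig γ (j₀ + j)) :
    epsDig β (i₀ + k) ≤ epsDig γ (j₀ + k) := by
  have hγ : 0 < γ := lt_of_lt_of_le hβ hβγ
  have h := betaChain β γ hβ hβγ i₀ j₀ hbase k hdig
  have h1 := epsDig_le β hβ (i₀ + k)
  have h2 := lt_epsDig_add_one γ hγ (j₀ + k)
  have : (epsDig β (i₀+k) : ℝ) < (epsDig γ (j₀+k) : ℝ) + 1 := by linarith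
  exact_mod_cast Nat.lt_succ_iff.1 (by exact_mod_cast this)

lemma digit_le0 (β γ : ℝ) (hβ : 0 < β) (hlt : β < γ) (k : ℕ)
    (hdig : ∀ j, j < k → epsDig β j = epsDig γ j) : epsDig β k ≤ epsDig γ k := by
  have := digit_le_of_chain β γ hβ hlt.le 0 0 (by simpa using hlt) k
    (by simpa using hdig)
  simpa using this

lemma selfadm_le (β : ℝ) (hβ : 1 < β) (i : ℕ) (hi : 1 ≤ i) (k : ℕ)
    (hdig : ∀ j, j < k → epsDig β (i + j) = epsDig β j) :
    epsDig β (i + k) ≤ epsDig β k := by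
  have hb : 0 < β := lt_trans one_pos hβ
  have hbase : β * (betaT β)^[i] 1 < β * (betaT β)^[0] 1 := by
    simp only [Function.iterate_zero_apply, mul_one]
    nlinarith [orbit_lt_one β hi, orbit_nonneg β i]
  have := digit_le_of_chain β β hb le_rfl i 0 hbase k (by simpa using hdig)
  simpa using this


noncomputable def polyP (w : ℕ → ℕ) : ℕ → ℝ → ℝ
  | 0, _ => 1
  | n+1, β => β * polyP w n β - (w n : ℝ)

lemma polyP_cont (w : ℕ → ℕ) (n : ℕ) : Continuous (fun β => polyP w n β) := by
  induction n with
  | zero => simpa [polyP] using continuous_const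
  | succ n ih =>
    show Continuous (fun β => β * polyP w n β - (w n : ℝ))
    exact (continuous_id.mul ih).sub continuous_const

section cyl
variable (β₀ : ℝ) (m : ℕ)

lemma polyP_eq_orbit {β : ℝ} (hβ : β ∈ cylP (m+1) (epsDig β₀)) :
    ∀ n, n ≤ m + 1 → polyP (epsDig β₀) n β = (betaT β)^[n] 1 := by
  intro n
  induction n with
  | zero => intro _; simp [polyP]
  | succ n ih =>
    intro hn
    have hb : 0 < β := lt_trans one_pos hβ.1
    have hd : epsDig β n = epsDig β₀ n := hβ.2 n (by omega)
    rw [polyP, ih (by omega), orbit_succ β hb n, hd]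

lemma cyl_bdd : BddAbove (cylP (m+1) (epsDig β₀)) := by
  refine ⟨(epsDig β₀ 0 : ℝ) + 1, fun β hβ => ?_⟩
  have hb : 0 < β := lt_trans one_pos hβ.1
  have h := lt_epsDig_add_one β hb 0
  simp only [Function.iterate_zero_apply, mul_one] at h
  rw [hβ.2 0 (by omega)] at h
  linarith

lemma cyl_mem (h0 : 1 < β₀) : β₀ ∈ cylP (m+1) (epsDig β₀) := ⟨h0, fun _ _ => rfl⟩

lemma mem_cyl_of_mem_Ico (h0 : 1 < β₀) {β : ℝ}
    (hβ : β ∈ Set.Ico β₀ (sSup (cylP (m+1) (epsDig β₀)))) :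
    β ∈ cylP (m+1) (epsDig β₀) := by
  obtain ⟨hβ0, hβ2⟩ := hβ
  obtain ⟨β'', hβ''C, hββ''⟩ :=
    exists_lt_of_lt_csSup ⟨β₀, cyl_mem β₀ m h0⟩ hβ2
  refine ⟨lt_of_lt_of_le h0 hβ0, ?_⟩
  intro i hi
  induction i using Nat.strong_induction_on with
  | _ i IH =>
    have hag : ∀ j, j < i → epsDig β j = epsDig β₀ j :=
      fun j hj => IH j hj (by omega)
    rcases eq_or_lt_of_le hβ0 with h | h
    · rw [← h]
    · have h1 : epsDig β₀ i ≤ epsDig β i :=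
        digit_le0 β₀ β (lt_trans one_pos h0) h i (fun j hj => (hag j hj).symm)
      have h2 : epsDig β i ≤ epsDig β'' i := by
        apply digit_le0 β β'' (lt_trans one_pos (lt_of_lt_of_le h0 hβ0)) hββ'' i
        intro j hj
        rw [hag j hj, hβ''C.2 j (by omega)]
      rw [hβ''C.2 i hi] at h2
      omega
end cyl

section sup
variable (β₀ : ℝ) (m : ℕ)

local notation "W" => epsDig β₀
local notation "C" => cylP (m+1) (epsDig β₀)
local notation "β₂" => sSup (cylP (m+1) (epsDig β₀))

lemma nebot_at_sup (hlt : β₀ < β₂) : (nhdsWithin β₂ (Set.Ico β₀ β₂)).NeBot := by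
  apply mem_closure_iff_nhdsWithin_neBot.1
  rw [closure_Ico (ne_of_lt hlt)]
  exact ⟨hlt.le, le_rfl⟩

lemma sup_lb (h0 : 1 < β₀) (hlt : β₀ < β₂) {n : ℕ} (hn : n ≤ m) :
    (W n : ℝ) ≤ β₂ * polyP W n β₂ := by
  have := nebot_at_sup β₀ m hlt
  have htend : Filter.Tendsto (fun β => β * polyP W n β) (nhdsWithin β₂ (Set.Ico β₀ β₂))
      (nhds (β₂ * polyP W n β₂)) :=
    ((continuous_id.mul (polyP_cont W n)).continuousAt).continuousWithinAt
  refine ge_of_tendsto htend (Filter.eventually_of_mem self_mem_nhdsWithin ?_)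
  intro β hβ
  have hβC : β ∈ C := mem_cyl_of_mem_Ico β₀ m h0 hβ
  have hb : 0 < β := lt_trans one_pos hβC.1
  have he := polyP_eq_orbit β₀ m hβC n (by omega)
  rw [he]
  have := epsDig_le β hb n
  rw [hβC.2 n (by omega)] at this
  exact this

lemma sup_ub (h0 : 1 < β₀) (hlt : β₀ < β₂) {n : ℕ} (hn : n ≤ m) :
    β₂ * polyP W n β₂ ≤ (W n : ℝ) + 1 := by
  have := nebot_at_sup β₀ m hlt
  have htend : Filter.Tendsto (fun β => β * polyP W n β) (nhdsWithin β₂ (Set.Ico β₀ β₂))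
      (nhds (β₂ * polyP W n β₂)) :=
    ((continuous_id.mul (polyP_cont W n)).continuousAt).continuousWithinAt
  refine le_of_tendsto htend (Filter.eventually_of_mem self_mem_nhdsWithin ?_)
  intro β hβ
  have hβC : β ∈ C := mem_cyl_of_mem_Ico β₀ m h0 hβ
  have hb : 0 < β := lt_trans one_pos hβC.1
  have he := polyP_eq_orbit β₀ m hβC n (by omega)
  rw [he]
  have := lt_epsDig_add_one β hb n
  rw [hβC.2 n (by omega)] at this
  linarith

lemma sup_poly_nonneg (h0 : 1 < β₀) (hlt : β₀ < β₂) {n : ℕ} (hn : n ≤ m + 1) :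
    0 ≤ polyP W n β₂ := by
  have := nebot_at_sup β₀ m hlt
  have htend : Filter.Tendsto (fun β => polyP W n β) (nhdsWithin β₂ (Set.Ico β₀ β₂))
      (nhds (polyP W n β₂)) := ((polyP_cont W n).continuousAt).continuousWithinAt
  refine ge_of_tendsto htend (Filter.eventually_of_mem self_mem_nhdsWithin ?_)
  intro β hβ
  have hβC : β ∈ C := mem_cyl_of_mem_Ico β₀ m h0 hβ
  rw [polyP_eq_orbit β₀ m hβC n hn]
  exact orbit_nonneg β n

lemma pmono (h0 : 1 < β₀) (hlt : β₀ < β₂) {n : ℕ} (hn : n ≤ m + 1) {β γ : ℝ}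
    (hβ : β₀ ≤ β) (hβγ : β < γ) (hγ : γ ≤ β₂) :
    β * polyP W n β < γ * polyP W n γ := by
  have hβC : β ∈ C := mem_cyl_of_mem_Ico β₀ m h0 ⟨hβ, lt_of_lt_of_le hβγ hγ⟩
  have hb : 0 < β := lt_trans one_pos hβC.1
  induction n with
  | zero => simpa [polyP] using hβγ
  | succ n ih =>
    have h1 := ih (by omega)
    have huv : polyP W (n+1) β < polyP W (n+1) γ := by
      simp only [polyP]; linarith
    have hu : 0 ≤ polyP W (n+1) β := by
      rw [polyP_eq_orbit β₀ m hβC (n+1) hn]; exact orbit_nonneg β (n+1)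
    calc β * polyP W (n+1) β < β * polyP W (n+1) γ := (mul_lt_mul_iff_right₀ hb).2 huv
      _ ≤ γ * polyP W (n+1) γ := mul_le_mul_of_nonneg_right hβγ.le (by linarith)
end sup

section dich
variable (β₀ : ℝ) (m : ℕ)

local notation "W" => epsDig β₀
local notation "C" => cylP (m+1) (epsDig β₀)
local notation "β₂" => sSup (cylP (m+1) (epsDig β₀))

lemma sup_prefix (h0 : 1 < β₀) (hlt : β₀ < β₂) :
    ∀ j, j ≤ m + 1 → (∀ j', j' < j → β₂ * polyP W j' β₂ < (W j' : ℝ) + 1) →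
      (betaT β₂)^[j] 1 = polyP W j β₂ ∧ ∀ j', j' < j → epsDig β₂ j' = W j' := by
  have hb2 : 0 < β₂ := lt_trans one_pos (lt_trans h0 hlt)
  intro j
  induction j with
  | zero => intro _ _; exact ⟨by simp [polyP], fun j' hj' => absurd hj' (by omega)⟩
  | succ j ih =>
    intro hj hstrict
    obtain ⟨horb, hdig⟩ := ih (by omega) (fun j' hj' => hstrict j' (by omega))
    have hub : β₂ * polyP W j β₂ < (W j : ℝ) + 1 := hstrict j (by omega)
    have hlb : (W j : ℝ) ≤ β₂ * polyP W j β₂ := sup_lb β₀ m h0 hlt (by omega)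
    have hde : epsDig β₂ j = W j := by
      have h1 := epsDig_le β₂ hb2 j
      have h2 := lt_epsDig_add_one β₂ hb2 j
      rw [horb] at h1 h2
      have c1 : (epsDig β₂ j : ℝ) < (W j : ℝ) + 1 := by linarith
      have c2 : (W j : ℝ) < (epsDig β₂ j : ℝ) + 1 := by linarith
      have c1' : epsDig β₂ j < W j + 1 := by exact_mod_cast c1
      have c2' : W j < epsDig β₂ j + 1 := by exact_mod_cast c2
      omega
    constructor
    · rw [orbit_succ β₂ hb2 j, horb, hde]; rfl
    · intro j' hj'
      rcases Nat.lt_succ_iff_lt_or_eq.1 hj' with h | h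
      · exact hdig j' h
      · rw [h, hde]

lemma sup_dichotomy (h0 : 1 < β₀) (hlt : β₀ < β₂) :
    (∀ j, j ≤ m → epsDig β₂ j = W j) ∨
    (∃ n, n ≤ m ∧ (∀ j, j < n → epsDig β₂ j = W j) ∧ epsDig β₂ n = W n + 1 ∧
      (∀ j, n < j → epsDig β₂ j = 0) ∧ (∀ j, j ≤ m → W j = W (j % (n+1)))) := by
  classical
  have hb2 : 0 < β₂ := lt_trans one_pos (lt_trans h0 hlt)
  by_cases H : ∃ j, j ≤ m ∧ β₂ * polyP W j β₂ = (W j : ℝ) + 1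
  · right
    set n := Nat.find H with hn_def
    obtain ⟨hnm, hneq⟩ : n ≤ m ∧ β₂ * polyP W n β₂ = (W n : ℝ) + 1 := Nat.find_spec H
    have hmin : ∀ j', j' < n → β₂ * polyP W j' β₂ < (W j' : ℝ) + 1 := by
      intro j' hj'
      have := Nat.find_min H hj'
      have hub := sup_ub β₀ m h0 hlt (show j' ≤ m by omega)
      rcases lt_or_eq_of_le hub with h | h
      · exact h
      · exact absurd ⟨by omega, h⟩ this
    obtain ⟨horb, hdig⟩ := sup_prefix β₀ m h0 hlt n (by omega) hmin
    have hde : epsDig β₂ n = W n + 1 := by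
      have h1 := epsDig_le β₂ hb2 n
      have h2 := lt_epsDig_add_one β₂ hb2 n
      rw [horb, hneq] at h1 h2
      have c1 : epsDig β₂ n < W n + 1 + 1 := by exact_mod_cast (by push_cast; linarith :
        (epsDig β₂ n : ℝ) < ((W n + 1 : ℕ) : ℝ) + 1)
      have c2 : W n + 1 < epsDig β₂ n + 1 := by exact_mod_cast (by push_cast; linarith :
        ((W n + 1 : ℕ) : ℝ) < (epsDig β₂ n : ℝ) + 1)
      omega
    have horb1 : (betaT β₂)^[n+1] 1 = 0 := by
      rw [orbit_succ β₂ hb2 n, horb, hde]; push_cast; linarith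
    have horb0 : ∀ k, (betaT β₂)^[n+1+k] 1 = 0 := by
      intro k
      induction k with
      | zero => simpa using horb1
      | succ k ih =>
        rw [show n+1+(k+1) = (n+1+k)+1 by ring, Function.iterate_succ_apply', ih]
        simp [betaT]
    have hzero : ∀ j, n < j → epsDig β₂ j = 0 := by
      intro j hj
      obtain ⟨k, rfl⟩ : ∃ k, j = n+1+k := ⟨j - (n+1), by omega⟩
      simp [epsDig, horb0 k]
    -- periodicity
    have Tstep : ∀ i, n+1+i ≤ m → polyP W (n+1+i) β₂ = polyP W i β₂ → W (n+1+i) = W i := by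
      intro i him hP
      have hnoflo : ∀ l, l ≤ m → β₂ * polyP W l β₂ ≠ (W l : ℝ) := by
        intro l hl hcon
        have h1 : (W l : ℝ) ≤ β₀ * polyP W l β₀ := by
          rw [polyP_eq_orbit β₀ m (cyl_mem β₀ m h0) l (by omega)]
          have := epsDig_le β₀ (lt_trans one_pos h0) l
          rwa [(cyl_mem β₀ m h0).2 l (by omega)] at this
        have h2 : β₀ * polyP W l β₀ < β₂ * polyP W l β₂ :=
          pmono β₀ m h0 hlt (by omega) le_rfl hlt le_rfl
        rw [hcon] at h2; linarith
      have b1 : (W (n+1+i) : ℝ) ≤ β₂ * polyP W (n+1+i) β₂ := sup_lb β₀ m h0 hlt him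
      have b2 : β₂ * polyP W (n+1+i) β₂ ≤ (W (n+1+i) : ℝ) + 1 := sup_ub β₀ m h0 hlt him
      have b3 : (W i : ℝ) ≤ β₂ * polyP W (n+1+i) β₂ := by
        rw [hP]; exact sup_lb β₀ m h0 hlt (by omega)
      have b4 : β₂ * polyP W (n+1+i) β₂ ≤ (W i : ℝ) + 1 := by
        rw [hP]; exact sup_ub β₀ m h0 hlt (by omega)
      have ne1 : β₂ * polyP W (n+1+i) β₂ ≠ (W (n+1+i) : ℝ) := hnoflo (n+1+i) him
      have ne2 : β₂ * polyP W (n+1+i) β₂ ≠ (W i : ℝ) := by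
        rw [hP]; exact hnoflo i (by omega)
      have c1 : (W (n+1+i) : ℝ) < (W i : ℝ) + 1 := lt_of_lt_of_le (lt_of_le_of_ne b1 (Ne.symm ne1)) b4
      have c2 : (W i : ℝ) < (W (n+1+i) : ℝ) + 1 := lt_of_lt_of_le (lt_of_le_of_ne b3 (Ne.symm ne2)) b2
      have c1' : W (n+1+i) < W i + 1 := by exact_mod_cast c1
      have c2' : W i < W (n+1+i) + 1 := by exact_mod_cast c2
      omega
    have S : ∀ i, n+1+i ≤ m + 1 → polyP W (n+1+i) β₂ = polyP W i β₂ := by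
      intro i
      induction i with
      | zero =>
        intro _
        have e : polyP W (n+1) β₂ = β₂ * polyP W n β₂ - (W n : ℝ) := rfl
        have e0 : polyP W 0 β₂ = 1 := rfl
        show polyP W (n+1) β₂ = polyP W 0 β₂
        rw [e, e0, hneq]; ring
      | succ i ih =>
        intro hi
        have hPi := ih (by omega)
        have hWi := Tstep i (by omega) hPi
        have e1 : polyP W ((n+1+i)+1) β₂ = β₂ * polyP W (n+1+i) β₂ - (W (n+1+i) : ℝ) := rfl
        have e2 : polyP W (i+1) β₂ = β₂ * polyP W i β₂ - (W i : ℝ) := rfl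
        rw [show n+1+(i+1) = (n+1+i)+1 by ring, e1, e2, hPi, hWi]
    have PER : ∀ j, j ≤ m → W j = W (j % (n+1)) := by
      intro j
      induction j using Nat.strong_induction_on with
      | _ j IH =>
        intro hj
        by_cases hjn : j < n + 1
        · rw [Nat.mod_eq_of_lt hjn]
        · obtain ⟨i, rfl⟩ : ∃ i, j = n+1+i := ⟨j - (n+1), by omega⟩
          have h1 : W (n+1+i) = W i := Tstep i hj (S i (by omega))
          have h2 : (n+1+i) % (n+1) = i % (n+1) := by
            rw [show n+1+i = (n+1)+i by ring, Nat.add_mod_left]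
          rw [h1, h2]
          exact IH i (by omega) (by omega)
    exact ⟨n, hnm, hdig, hde, hzero, PER⟩
  · left
    push_neg at H
    have hstrict : ∀ j', j' < m + 1 → β₂ * polyP W j' β₂ < (W j' : ℝ) + 1 := by
      intro j' hj'
      have hub := sup_ub β₀ m h0 hlt (show j' ≤ m by omega)
      exact lt_of_le_of_ne hub (H j' (by omega))
    obtain ⟨_, hdig⟩ := sup_prefix β₀ m h0 hlt (m+1) le_rfl hstrict
    exact fun j hj => hdig j (by omega)

end dich



lemma seqLexLe_trans_lt {a b c : ℕ → ℕ} (h1 : seqLexLe a b) (h2 : seqLexLt b c) :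
    seqLexLt a c := by
  rcases h1 with ⟨k1, hag1, hlt1⟩ | rfl
  · obtain ⟨k2, hag2, hlt2⟩ := h2
    rcases lt_trichotomy k1 k2 with h | h | h
    · exact ⟨k1, fun j hj => (hag1 j hj).trans (hag2 j (hj.trans h)),
        by rw [← hag2 k1 h]; exact hlt1⟩
    · subst h
      exact ⟨k1, fun j hj => (hag1 j hj).trans (hag2 j hj), hlt1.trans hlt2⟩
    · exact ⟨k2, fun j hj => (hag1 j (hj.trans h)).trans (hag2 j hj),
        by rw [hag1 k2 h]; exact hlt2⟩
  · exact h2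

lemma epsStar_last_unique {β : ℝ} {p q : ℕ}
    (hp : epsDig β p ≠ 0 ∧ ∀ i, p < i → epsDig β i = 0)
    (hq : epsDig β q ≠ 0 ∧ ∀ i, q < i → epsDig β i = 0) : p = q := by
  rcases lt_trichotomy p q with h | h | h
  · exact absurd (hp.2 q h) hq.1
  · exact h
  · exact absurd (hq.2 p h) hp.1

lemma wordLexLe_of_digits (β : ℝ) (m : ℕ) (V : ℕ → ℕ)
    (hd : ∀ j, j ≤ m → epsDig β j = V j) : wordLexLe (m+1) (epsStar β) V := by
  unfold epsStar
  by_cases h : ∃ p, epsDig β p ≠ 0 ∧ ∀ i, p < i → epsDig β i = 0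
  · rw [dif_pos h]
    set p := h.choose with hp_def
    obtain ⟨hp1, hp2⟩ := h.choose_spec
    by_cases hpm : p ≤ m
    · left
      refine ⟨p, by omega, ?_, ?_⟩
      · intro j hj
        have h1 : j % (p+1) = j := Nat.mod_eq_of_lt (by omega)
        beta_reduce
        rw [h1, if_neg (by omega)]
        exact hd j (by omega)
      · have h1 : p % (p+1) = p := Nat.mod_eq_of_lt (by omega)
        beta_reduce
        rw [h1, if_pos rfl]
        have h2 : epsDig β p = V p := hd p hpm
        have h3 : epsDig β p ≠ 0 := by rw [hp_def]; exact hp1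
        omega
    · right
      intro j hj
      have h1 : j % (p+1) = j := Nat.mod_eq_of_lt (by omega)
      beta_reduce
      rw [h1, if_neg (by omega)]
      exact hd j (by omega)
  · rw [dif_neg h]
    exact Or.inr fun j hj => hd j (by omega)

lemma epsStar_of_periodic (β : ℝ) (n : ℕ) (V : ℕ → ℕ)
    (hlt : ∀ j, j < n → epsDig β j = V j) (hn : epsDig β n = V n + 1)
    (hz : ∀ j, n < j → epsDig β j = 0) :
    ∀ j, epsStar β j = V (j % (n+1)) := by
  intro j
  have h : ∃ p, epsDig β p ≠ 0 ∧ ∀ i, p < i → epsDig β i = 0 :=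
    ⟨n, by omega, hz⟩
  unfold epsStar
  rw [dif_pos h]
  have hpn : h.choose = n := epsStar_last_unique h.choose_spec ⟨by omega, hz⟩
  rw [hpn]
  beta_reduce
  by_cases hc : j % (n+1) = n
  · rw [if_pos hc, hn, hc]; omega
  · rw [if_neg hc]
    have : j % (n+1) < n + 1 := Nat.mod_lt _ (by omega)
    exact hlt _ (by omega)

lemma sup_wordLexLe (β₀ : ℝ) (m : ℕ) (h0 : 1 < β₀) :
    wordLexLe (m+1) (epsStar (sSup (cylP (m+1) (epsDig β₀)))) (epsDig β₀) := by
  set β₂ := sSup (cylP (m+1) (epsDig β₀)) with hβ₂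
  by_cases hmem : β₂ ∈ cylP (m+1) (epsDig β₀)
  · exact wordLexLe_of_digits β₂ m (epsDig β₀) (fun j hj => hmem.2 j (by omega))
  · have hle : β₀ ≤ β₂ := le_csSup (cyl_bdd β₀ m) (cyl_mem β₀ m h0)
    have hlt : β₀ < β₂ := lt_of_le_of_ne hle (fun h => hmem (h ▸ cyl_mem β₀ m h0))
    rcases sup_dichotomy β₀ m h0 hlt with hA | ⟨n, hnm, hdlt, hdn, hdz, hper⟩
    · exact wordLexLe_of_digits β₂ m (epsDig β₀) hA
    · right
      intro j hj
      rw [epsStar_of_periodic β₂ n (epsDig β₀) hdlt hdn hdz j]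
      exact (hper j (by omega)).symm


lemma epsDig_zero_pos {β : ℝ} (hβ : 1 < β) : 1 ≤ epsDig β 0 := by
  have hb : 0 < β := lt_trans one_pos hβ
  have h := lt_epsDig_add_one β hb 0
  simp only [Function.iterate_zero_apply, mul_one] at h
  have h2 : (1:ℝ) < (epsDig β 0 : ℝ) + 1 := by linarith
  have h3 : 1 < epsDig β 0 + 1 := by exact_mod_cast h2
  omega

/-- Lemma 5.3. Let `1 < β₀ < β₁` both have infinite expansions
of 1, let `m` be the (0-indexed) first place where the expansions of 1 differ and
let `β₂` be the right endpoint of the cylinder `I_{m+1}^P(ε_1(1,β₀),…,ε_{m+1}(1,β₀))`.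
Then for every `w ∈ S_{β₂}`, the sequence
`ε = (ε_1(1,β₁),…,ε_{m+1}(1,β₁), 0^{m+1}, w)` is self-admissible:
`σ^i ε ≺ ε` for all `i ≥ 1`. -/
theorem prefix_zeros_self_admissible (β₀ β₁ : ℝ) (h0 : 1 < β₀) (h01 : β₀ < β₁)
    (hinf0 : ∀ N, ∃ i ≥ N, epsDig β₀ i ≠ 0)
    (hinf1 : ∀ N, ∃ i ≥ N, epsDig β₁ i ≠ 0)
    (m : ℕ) (hpre : ∀ i < m, epsDig β₀ i = epsDig β₁ i)
    (hdiff : epsDig β₀ m ≠ epsDig β₁ m)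
    (w : ℕ → ℕ) (hw : w ∈ Sbeta (sSup (cylP (m + 1) (epsDig β₀)))) :
    ∀ i, 1 ≤ i →
      seqLexLt
        (fun j => (fun l => if l < m + 1 then epsDig β₁ l
          else if l < 2 * (m + 1) then 0 else w (l - 2 * (m + 1))) (i + j))
        (fun l => if l < m + 1 then epsDig β₁ l
          else if l < 2 * (m + 1) then 0 else w (l - 2 * (m + 1))) := by

  classical
  intro i hi
  set E : ℕ → ℕ := fun l => if l < m + 1 then epsDig β₁ l
      else if l < 2 * (m + 1) then 0 else w (l - 2 * (m + 1)) with hE_def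
  show seqLexLt (fun j => E (i + j)) E
  have h1 : 1 < β₁ := lt_trans h0 h01
  have hm : epsDig β₀ m < epsDig β₁ m :=
    lt_of_le_of_ne (digit_le0 β₀ β₁ (lt_trans one_pos h0) h01 m hpre) hdiff
  have hE1 : ∀ l, l ≤ m → E l = epsDig β₁ l := fun l hl => if_pos (by omega)
  have hEz : ∀ l, m + 1 ≤ l → l < 2 * (m + 1) → E l = 0 := by
    intro l hl1 hl2
    rw [hE_def]
    beta_reduce
    rw [if_neg (by omega), if_pos hl2]
  have hEw : ∀ l, 2 * (m + 1) ≤ l → E l = w (l - 2 * (m + 1)) := by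
    intro l hl
    rw [hE_def]
    beta_reduce
    rw [if_neg (by omega), if_neg (by omega)]
  by_cases hc1 : i < m + 1
  · -- 1 ≤ i ≤ m
    by_cases hex : ∃ j, j ≤ m - i ∧ epsDig β₁ (i + j) ≠ epsDig β₁ j
    · set k := Nat.find hex with hk_def
      obtain ⟨hk1, hk2⟩ : k ≤ m - i ∧ epsDig β₁ (i + k) ≠ epsDig β₁ k := Nat.find_spec hex
      have hmin : ∀ j, j < k → epsDig β₁ (i + j) = epsDig β₁ j := by
        intro j hj
        have := Nat.find_min hex hj
        push_neg at this
        exact this (by omega)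
      refine ⟨k, ?_, ?_⟩
      · intro j hj
        show E (i + j) = E j
        rw [hE1 (i + j) (by omega), hE1 j (by omega)]
        exact hmin j hj
      · show E (i + k) < E k
        rw [hE1 (i + k) (by omega), hE1 k (by omega)]
        exact lt_of_le_of_ne (selfadm_le β₁ h1 i hi k hmin) hk2
    · push_neg at hex
      have hm1 : 1 ≤ epsDig β₁ m := by omega
      have hex2 : ∃ j, m + 1 - i ≤ j ∧ epsDig β₁ j ≠ 0 := ⟨m, by omega, by omega⟩
      set k := Nat.find hex2 with hk_def
      obtain ⟨hk1, hk2⟩ : m + 1 - i ≤ k ∧ epsDig β₁ k ≠ 0 := Nat.find_spec hex2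
      have hkm : k ≤ m := Nat.find_min' hex2 ⟨by omega, by omega⟩
      refine ⟨k, ?_, ?_⟩
      · intro j hj
        show E (i + j) = E j
        by_cases hjl : j ≤ m - i
        · rw [hE1 (i + j) (by omega), hE1 j (by omega)]
          exact hex j hjl
        · have hj0 : epsDig β₁ j = 0 := by
            have := Nat.find_min hex2 hj
            push_neg at this
            exact this (by omega)
          rw [hE1 j (by omega), hj0, hEz (i + j) (by omega) (by omega)]
      · show E (i + k) < E k
        rw [hE1 k hkm, hEz (i + k) (by omega) (by omega)]
        omega
  · by_cases hc2 : i < 2 * (m + 1)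
    · refine ⟨0, fun j hj => absurd hj (by omega), ?_⟩
      show E (i + 0) < E 0
      have h00 : E (i + 0) = 0 := hEz (i + 0) (by omega) (by omega)
      have h01' : 1 ≤ E 0 := by
        rw [hE1 0 (by omega)]
        exact epsDig_zero_pos h1
      omega
    · -- i ≥ 2(m+1)
      have hfun : (fun j => E (i + j)) = (fun j => w ((i - 2 * (m + 1)) + j)) := by
        funext j
        rw [hEw (i + j) (by omega)]
        congr 1
        omega
      have hwle : seqLexLe (fun j => w ((i - 2 * (m + 1)) + j))
          (epsStar (sSup (cylP (m + 1) (epsDig β₀)))) := hw (i - 2 * (m + 1))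
      have hKEY : seqLexLt (epsStar (sSup (cylP (m + 1) (epsDig β₀)))) E := by
        rcases sup_wordLexLe β₀ m h0 with ⟨k, hk, hag, hlk⟩ | heq
        · refine ⟨k, ?_, ?_⟩
          · intro j hj
            rw [hag j hj, hE1 j (by omega)]
            exact hpre j (by omega)
          · rw [hE1 k (by omega)]
            rcases Nat.lt_or_ge k m with h | h
            · rw [← hpre k h]; exact hlk
            · have : k = m := by omega
              subst this
              omega
        · refine ⟨m, ?_, ?_⟩
          · intro j hj
            rw [heq j (by omega), hE1 j (by omega)]
            exact hpre j hj
          · rw [heq m (by omega), hE1 m (by omega)]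
            exact hm
      rw [hfun]
      exact seqLexLe_trans_lt hwle hKEY
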